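/- Let p ≥ 1 and let X, Y be 2p×2p complex Hermitian matrices with XY + YX = 0, Y invertible, and X having 2p distinct eigenvalues. Then there exist a unitary 2p×2p matrix U and positive real numbers x₁, …, x_p (pairwise distinct) and y₁, …, y_p such that U*·X·U is the block-diagonal matrix with 2×2 diagonal blocks diag(x_j, −x_j) for j = 1, …, p, and U*·Y·U is the block-diagonal matrix with 2×2 diagonal blocks [[0, y_j], [y_j, 0]] for j = 1, …, p. -/

import Mathlib

open Matrix

/-- The 0-based index in `Fin (2*p)` corresponding to the 1-based index `2i - α`. -/
def idx {p : ℕ} (i : Fin p) (α : Fin 2) : Fin (2 * p) :=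
  ⟨2 * i.val + 1 - α.val, by have := i.isLt; have := α.isLt; omega⟩

/-- Block-diagonal matrix with 2×2 diagonal blocks `diag (x_j, -x_j)`. -/
noncomputable def Amat {p : ℕ} (x : Fin p → ℝ) : Matrix (Fin (2 * p)) (Fin (2 * p)) ℂ :=
  ∑ j : Fin p, (x j : ℂ) •
    (Matrix.single (idx j 1) (idx j 1) 1 - Matrix.single (idx j 0) (idx j 0) 1)

/-- Block-diagonal matrix with 2×2 diagonal blocks `[[0, y_j], [y_j, 0]]`. -/
noncomputable def Bmat {p : ℕ} (y : Fin p → ℝ) : Matrix (Fin (2 * p)) (Fin (2 * p)) ℂ :=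
  ∑ j : Fin p, (y j : ℂ) •
    (Matrix.single (idx j 1) (idx j 0) 1 + Matrix.single (idx j 0) (idx j 1) 1)

lemma idx_eq_iff {p : ℕ} {j j' : Fin p} {α α' : Fin 2} :
    idx j α = idx j' α' ↔ j = j' ∧ α = α' := by
  have := α.isLt; have := α'.isLt
  simp only [idx, Fin.ext_iff]
  omega

lemma idx_surj {p : ℕ} (k : Fin (2*p)) : ∃ j α, idx j α = k :=
  ⟨⟨k.val/2, by have := k.isLt; omega⟩, ⟨1 - k.val % 2, by omega⟩, by
    simp only [idx, Fin.ext_iff]; omega⟩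

lemma Amat_apply {p : ℕ} (x : Fin p → ℝ) (j j' : Fin p) (α α' : Fin 2) :
    Amat x (idx j α) (idx j' α') =
      if j = j' ∧ α = α' then (if α.val = 0 then -(x j : ℂ) else (x j)) else 0 := by
  simp only [Amat, Matrix.sum_apply, Matrix.smul_apply, Matrix.sub_apply,
    Matrix.single, Matrix.of_apply, idx_eq_iff, smul_eq_mul]
  by_cases hjj : j = j'
  · subst hjj
    fin_cases α <;> fin_cases α' <;>
      simp [Finset.sum_ite_eq']
  · fin_cases α <;> fin_cases α' <;>
      simp [Finset.sum_ite_eq', hjj, fun (i : Fin p) => (show ¬(i = j ∧ i = j') by rintro ⟨rfl,rfl⟩; exact hjj rfl)]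

lemma Bmat_apply {p : ℕ} (y : Fin p → ℝ) (j j' : Fin p) (α α' : Fin 2) :
    Bmat y (idx j α) (idx j' α') =
      if j = j' ∧ α ≠ α' then (y j : ℂ) else 0 := by
  simp only [Bmat, Matrix.sum_apply, Matrix.smul_apply, Matrix.add_apply,
    Matrix.single, Matrix.of_apply, idx_eq_iff, smul_eq_mul]
  by_cases hjj : j = j'
  · subst hjj
    fin_cases α <;> fin_cases α' <;>
      simp [Finset.sum_ite_eq']
  · fin_cases α <;> fin_cases α' <;>
      simp [Finset.sum_ite_eq', hjj, fun (i : Fin p) => (show ¬(i = j ∧ i = j') by rintro ⟨rfl,rfl⟩; exact hjj rfl)]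

lemma fin2_cases (α : Fin 2) : α = 0 ∨ α = 1 := by
  rcases α with ⟨v, hv⟩
  rcases v with _|_|v
  · exact Or.inl rfl
  · exact Or.inr rfl
  · omega

lemma phase_unit (w : ℂ) (hw : w ≠ 0) :
    (starRingEnd ℂ) ((starRingEnd ℂ) w / (‖w‖ : ℂ)) * ((starRingEnd ℂ) w / (‖w‖ : ℂ)) = 1 := by
  have h2 : (‖w‖ : ℂ) ≠ 0 := by
    simpa using (norm_ne_zero_iff.mpr hw)
  rw [map_div₀, Complex.conj_conj, Complex.conj_ofReal]
  field_simp
  rw [Complex.mul_conj, ← Complex.sq_norm]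
  push_cast
  ring

lemma mul_phase (w : ℂ) (hw : w ≠ 0) :
    w * ((starRingEnd ℂ) w / (‖w‖ : ℂ)) = (‖w‖ : ℂ) := by
  have h2 : (‖w‖ : ℂ) ≠ 0 := by simpa using (norm_ne_zero_iff.mpr hw)
  field_simp
  rw [Complex.mul_conj, ← Complex.sq_norm]
  push_cast
  ring

lemma phase_mul (w : ℂ) (hw : w ≠ 0) :
    (starRingEnd ℂ) ((starRingEnd ℂ) w / (‖w‖ : ℂ)) * (starRingEnd ℂ) w = (‖w‖ : ℂ) := by
  have h2 : (‖w‖ : ℂ) ≠ 0 := by simpa using (norm_ne_zero_iff.mpr hw)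
  rw [map_div₀, Complex.conj_conj, Complex.conj_ofReal]
  field_simp
  rw [Complex.mul_conj, ← Complex.sq_norm]
  push_cast
  ring

theorem stmt_15 (p : ℕ) (hp : 1 ≤ p) (X Y : Matrix (Fin (2 * p)) (Fin (2 * p)) ℂ)
    (hX : X.IsHermitian) (hY : Y.IsHermitian)
    (hanti : X * Y + Y * X = 0) (hYinv : IsUnit Y)
    (hdistinct : Function.Injective hX.eigenvalues) :
    ∃ U ∈ Matrix.unitaryGroup (Fin (2 * p)) ℂ, ∃ x y : Fin p → ℝ,
      (∀ j, 0 < x j) ∧ Function.Injective x ∧ (∀ j, 0 < y j) ∧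
      star U * X * U = Amat x ∧ star U * Y * U = Bmat y := by
  set lam := hX.eigenvalues with hlam
  set V : Matrix (Fin (2*p)) (Fin (2*p)) ℂ := (hX.eigenvectorUnitary : Matrix (Fin (2*p)) (Fin (2*p)) ℂ) with hVdef
  have hVmem : V ∈ Matrix.unitaryGroup (Fin (2*p)) ℂ := (hX.eigenvectorUnitary).2
  obtain ⟨hVV, hVV'⟩ := Unitary.mem_iff.mp hVmem
  set D : Matrix (Fin (2*p)) (Fin (2*p)) ℂ := Matrix.diagonal (RCLike.ofReal ∘ lam) with hDdef
  have hVXV : star V * X * V = D := by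
    have h := hX.conjStarAlgAut_star_eigenvectorUnitary
    rw [Unitary.conjStarAlgAut_apply, Unitary.coe_star, star_star] at h
    exact h
  set Y' : Matrix (Fin (2*p)) (Fin (2*p)) ℂ := star V * Y * V with hY'def
  have hY'h : Y'.IsHermitian := Matrix.isHermitian_conjTranspose_mul_mul V hY
  have hY'u : IsUnit Y' := by
    have h1 : IsUnit (star V) := ⟨⟨star V, V, hVV, hVV'⟩, rfl⟩
    have h2 : IsUnit V := ⟨⟨V, star V, hVV', hVV⟩, rfl⟩
    exact (h1.mul hYinv).mul h2
  -- anticommutation in the eigenbasis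
  have h0 : D * Y' + Y' * D = 0 := by
    have h1 : star V * (X * Y + Y * X) * V = 0 := by
      rw [hanti, Matrix.mul_zero, Matrix.zero_mul]
    rw [hY'def, ← hVXV]
    simp only [Matrix.mul_add, Matrix.add_mul, Matrix.mul_assoc] at h1 ⊢
    rw [show V * (star V * (Y * V)) = Y * V from by rw [← Matrix.mul_assoc, hVV', Matrix.one_mul],
        show V * (star V * (X * V)) = X * V from by rw [← Matrix.mul_assoc, hVV', Matrix.one_mul]]
    exact h1
  have hanti' : ∀ i l, Y' i l ≠ 0 → lam l = -lam i := by
    intro i l hne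
    have h1 : (D * Y' + Y' * D) i l = 0 := by rw [h0]; rfl
    rw [Matrix.add_apply, hDdef, Matrix.diagonal_mul, Matrix.mul_diagonal] at h1
    have h2 : ((lam i + lam l : ℝ) : ℂ) * Y' i l = 0 := by
      simp only [Function.comp, show (RCLike.ofReal : ℝ → ℂ) = Complex.ofReal from rfl] at h1
      push_cast
      linear_combination h1
    rcases mul_eq_zero.mp h2 with h | h
    · have : lam i + lam l = 0 := by exact_mod_cast h
      linarith
    · exact absurd h hne
  have hrow : ∀ i, ∃ l, Y' i l ≠ 0 := by
    intro i
    by_contra h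
    push_neg at h
    obtain ⟨B, hB⟩ := hY'u.exists_right_inv
    have h1 : (Y' * B) i i = (1 : Matrix (Fin (2*p)) (Fin (2*p)) ℂ) i i := by rw [hB]
    rw [Matrix.mul_apply] at h1
    simp [h] at h1
  obtain ⟨σ, hσz⟩ : ∃ σ : Fin (2*p) → Fin (2*p), ∀ i, Y' i (σ i) ≠ 0 :=
    ⟨fun i => (hrow i).choose, fun i => (hrow i).choose_spec⟩
  have hσ : ∀ i, lam (σ i) = -lam i := fun i => hanti' _ _ (hσz i)
  have huniq : ∀ i l, Y' i l ≠ 0 → l = σ i := by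
    intro i l h
    exact hdistinct (by rw [hanti' i l h, hσ i])
  have hvanish : ∀ i l, l ≠ σ i → Y' i l = 0 := by
    intro i l h
    by_contra h2
    exact h (huniq i l h2)
  have hσsymm : ∀ i, Y' (σ i) i ≠ 0 := by
    intro i
    rw [(hY'h.apply (σ i) i).symm]
    simpa using hσz i
  have hinvol : ∀ i, σ (σ i) = i := fun i => (huniq (σ i) i (hσsymm i)).symm
  have σinj : Function.Injective σ := fun a b h => by
    rw [← hinvol a, h, hinvol]
  -- counting: no zero eigenvalues, exactly p positive
  have hzero_and_card : (∀ i, lam i ≠ 0) ∧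
      (Finset.univ.filter fun i => 0 < lam i).card = p := by
    classical
    set Pf := Finset.univ.filter (fun i => 0 < lam i) with hPf
    set Nf := Finset.univ.filter (fun i => lam i < 0) with hNf
    set Zf := Finset.univ.filter (fun i => lam i = 0) with hZf
    have hPN : Pf.card = Nf.card := by
      apply Finset.card_bij' (fun a _ => σ a) (fun b _ => σ b)
      · intro a ha
        simp only [hPf, Finset.mem_filter, Finset.mem_univ, true_and] at ha
        simp only [hNf, Finset.mem_filter, Finset.mem_univ, true_and, hσ]
        linarith
      · intro b hb
        simp only [hNf, Finset.mem_filter, Finset.mem_univ, true_and] at hb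
        simp only [hPf, Finset.mem_filter, Finset.mem_univ, true_and, hσ]
        linarith
      · intro a _; exact hinvol a
      · intro b _; exact hinvol b
    have hdisj : Disjoint Pf Nf := by
      rw [Finset.disjoint_left]
      intro a ha hb
      simp only [hPf, Finset.mem_filter, Finset.mem_univ, true_and] at ha
      simp only [hNf, Finset.mem_filter, Finset.mem_univ, true_and] at hb
      linarith
    have hsplit := Finset.card_filter_add_card_filter_not
      (s := (Finset.univ : Finset (Fin (2*p)))) (p := fun i => lam i = 0)
    have he2 : Finset.univ.filter (fun i => ¬ lam i = 0) = Pf ∪ Nf := by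
      ext i
      simp only [hPf, hNf, Finset.mem_filter, Finset.mem_union, Finset.mem_univ, true_and]
      constructor
      · intro h
        rcases lt_or_gt_of_ne h with h' | h'
        · exact Or.inr h'
        · exact Or.inl h'
      · rintro (h | h)
        · exact ne_of_gt h
        · exact ne_of_lt h
    have hcardU : (Pf ∪ Nf).card = Pf.card + Nf.card := Finset.card_union_of_disjoint hdisj
    have hZ1 : Zf.card ≤ 1 := Finset.card_le_one.mpr (by
      intro a ha b hb
      simp only [hZf, Finset.mem_filter, Finset.mem_univ, true_and] at ha hb
      exact hdistinct (ha.trans hb.symm))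
    rw [he2, hcardU, Finset.card_univ, Fintype.card_fin] at hsplit
    rw [← hZf] at hsplit
    have hZ0 : Zf.card = 0 := by omega
    constructor
    · intro i hi
      have hmem : i ∈ Zf := by
        simp only [hZf, Finset.mem_filter, Finset.mem_univ, true_and]
        exact hi
      rw [Finset.card_eq_zero] at hZ0
      rw [hZ0] at hmem
      exact absurd hmem (Finset.notMem_empty i)
    · omega
  obtain ⟨hzero, hPcard⟩ := hzero_and_card
  have hcard : Fintype.card {i // 0 < lam i} = p := by
    rw [Fintype.card_subtype]; exact hPcard
  obtain ⟨e, he, einj⟩ : ∃ e : Fin p → Fin (2*p), (∀ j, 0 < lam (e j)) ∧ Function.Injective e := by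
    refine ⟨fun j => ((Fintype.equivFinOfCardEq hcard).symm j).1,
      fun j => ((Fintype.equivFinOfCardEq hcard).symm j).2, ?_⟩
    intro a b hab
    exact (Fintype.equivFinOfCardEq hcard).symm.injective (Subtype.ext hab)
  set z : Fin p → ℂ := fun j => Y' (e j) (σ (e j)) with hzdef
  have hzne : ∀ j, z j ≠ 0 := fun j => hσz (e j)
  -- the permutation and phases
  obtain ⟨π, hπinj, hπ1, hπ0⟩ : ∃ π : Fin (2*p) → Fin (2*p), Function.Injective π ∧
      (∀ j, π (idx j 1) = e j) ∧ (∀ j, π (idx j 0) = σ (e j)) := by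
    set q : Fin (2*p) → Fin p := fun k => ⟨k.val/2, by have := k.isLt; omega⟩ with hq
    refine ⟨fun k => if k.val % 2 = 0 then e (q k) else σ (e (q k)), ?_, ?_, ?_⟩
    · intro k l h
      simp only at h
      have hk := k.isLt; have hl := l.isLt
      by_cases pk : k.val % 2 = 0 <;> by_cases pl : l.val % 2 = 0
      · rw [if_pos pk, if_pos pl] at h
        have hv : k.val/2 = l.val/2 := congrArg Fin.val (einj h)
        exact Fin.ext (by omega)
      · rw [if_pos pk, if_neg pl] at h
        exfalso
        have h1 := congrArg lam h
        rw [hσ] at h1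
        have := he (q k); have := he (q l)
        linarith
      · rw [if_neg pk, if_pos pl] at h
        exfalso
        have h1 := congrArg lam h
        rw [hσ] at h1
        have := he (q k); have := he (q l)
        linarith
      · rw [if_neg pk, if_neg pl] at h
        have hv : k.val/2 = l.val/2 := congrArg Fin.val (einj (σinj h))
        exact Fin.ext (by omega)
    · intro j
      have h1 : (idx j (1:Fin 2)).val = 2*j.val := by simp [idx]
      have hqj : q (idx j (1:Fin 2)) = j := Fin.ext (by
        show (idx j (1:Fin 2)).val / 2 = j.val
        rw [h1]; omega)
      show (if (idx j (1:Fin 2)).val % 2 = 0 then e (q (idx j 1)) else σ (e (q (idx j 1)))) = e j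
      rw [if_pos (show (idx j (1:Fin 2)).val % 2 = 0 by rw [h1]; omega), hqj]
    · intro j
      have h1 : (idx j (0:Fin 2)).val = 2*j.val + 1 := by simp [idx]
      have hqj : q (idx j (0:Fin 2)) = j := Fin.ext (by
        show (idx j (0:Fin 2)).val / 2 = j.val
        rw [h1]; omega)
      show (if (idx j (0:Fin 2)).val % 2 = 0 then e (q (idx j 0)) else σ (e (q (idx j 0)))) = σ (e j)
      rw [if_neg (show ¬ (idx j (0:Fin 2)).val % 2 = 0 by rw [h1]; omega), hqj]
  obtain ⟨c, hc1, hc0⟩ : ∃ c : Fin (2*p) → ℂ,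
      (∀ j, c (idx j 1) = 1) ∧
      (∀ j, c (idx j 0) = (starRingEnd ℂ) (z j) / (‖z j‖ : ℂ)) := by
    refine ⟨fun k => if k.val % 2 = 0 then 1 else
      (starRingEnd ℂ) (z ⟨k.val/2, by have := k.isLt; omega⟩) /
        (‖z ⟨k.val/2, by have := k.isLt; omega⟩‖ : ℂ), ?_, ?_⟩
    · intro j
      have h1 : (idx j (1:Fin 2)).val = 2 * j.val := by simp [idx]
      simp only [h1]
      simp
    · intro j
      have h1 : (idx j (0:Fin 2)).val = 2 * j.val + 1 := by simp [idx]
      simp only [h1]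
      have h2 : (2 * j.val + 1) % 2 = 1 := by omega
      have h3 : (2 * j.val + 1) / 2 = j.val := by omega
      simp only [h2, h3]
      norm_num
  have hcc : ∀ k, (starRingEnd ℂ) (c k) * c k = 1 := by
    intro k
    obtain ⟨j, α, rfl⟩ := idx_surj k
    rcases fin2_cases α with rfl | rfl
    · rw [hc0]
      exact phase_unit _ (hzne j)
    · rw [hc1]; simp
  set W : Matrix (Fin (2*p)) (Fin (2*p)) ℂ :=
    Matrix.of (fun m k => if m = π k then c k else 0) with hWdef
  have hWapp : ∀ m k, W m k = if m = π k then c k else 0 := fun m k => rfl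
  have hWmem : W ∈ Matrix.unitaryGroup (Fin (2*p)) ℂ := by
    rw [Matrix.mem_unitaryGroup_iff']
    ext k l
    rw [Matrix.mul_apply]
    simp only [Matrix.star_apply, hWapp, Matrix.one_apply]
    have key : ∀ m : Fin (2*p), star (if m = π k then c k else 0) * (if m = π l then c l else 0)
        = if m = π k then (if m = π l then star (c k) * c l else 0) else 0 := by
      intro m; split_ifs <;> simp
    simp only [key]
    rw [Finset.sum_ite_eq' Finset.univ (π k)]
    simp only [Finset.mem_univ, if_true]
    by_cases h : k = l
    · subst h; simp [hcc k]
    · have : π k ≠ π l := fun hh => h (hπinj hh)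
      simp [this, h]
  -- general conjugation formula
  have hWMW : ∀ (M : Matrix (Fin (2*p)) (Fin (2*p)) ℂ) k l,
      (star W * M * W) k l = (starRingEnd ℂ) (c k) * M (π k) (π l) * c l := by
    intro M k l
    have h1 : ∀ n, (star W * M) k n = (starRingEnd ℂ) (c k) * M (π k) n := by
      intro n
      rw [Matrix.mul_apply]
      simp only [Matrix.star_apply, hWapp]
      have key : ∀ m : Fin (2*p), star (if m = π k then c k else 0) * M m n
          = if m = π k then star (c k) * M m n else 0 := by
        intro m; split_ifs <;> simp
      simp only [key]
      rw [Finset.sum_ite_eq' Finset.univ (π k)]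
      simp [Complex.star_def]
    rw [Matrix.mul_apply]
    simp only [h1, hWapp, mul_ite, mul_zero]
    rw [Finset.sum_ite_eq' Finset.univ (π l)]
    simp
  have hne1 : ∀ a b : Fin p, e a ≠ σ (e b) := by
    intro a b h
    have h2 := congrArg lam h
    rw [hσ] at h2
    have := he a; have := he b
    linarith
  refine ⟨V * W, mul_mem hVmem hWmem, fun j => lam (e j), fun j => ‖z j‖,
    fun j => he j, fun a b hab => einj (hdistinct hab), fun j => by
      simpa using (norm_pos_iff.mpr (hzne j)), ?_, ?_⟩
  · -- X part
    have hXW : star (V * W) * X * (V * W) = star W * D * W := by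
      rw [Matrix.star_mul, ← hVXV]
      simp only [Matrix.mul_assoc]
    rw [hXW]
    ext k l
    obtain ⟨j, α, rfl⟩ := idx_surj k
    obtain ⟨j', α', rfl⟩ := idx_surj l
    rw [hWMW, Amat_apply]
    rcases fin2_cases α with rfl | rfl <;> rcases fin2_cases α' with rfl | rfl
    · -- (0,0)
      rw [hπ0, hπ0, hc0, hc0]
      by_cases hjj : j = j'
      · subst hjj
        rw [hDdef, Matrix.diagonal_apply_eq]
        simp only [Function.comp, show (RCLike.ofReal : ℝ → ℂ) = Complex.ofReal from rfl, hσ]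
        have hcu := phase_unit (z j) (hzne j)
        simp only [and_self, if_true, Fin.val_zero, eq_self_iff_true]
        push_cast
        linear_combination (-(lam (e j) : ℂ)) * hcu
      · have hne : σ (e j) ≠ σ (e j') := fun h => hjj (einj (σinj h))
        rw [hDdef, Matrix.diagonal_apply_ne _ hne]
        simp [hjj]
    · -- (0,1)
      rw [hπ0, hπ1, hc0, hc1]
      have hne : σ (e j) ≠ e j' := fun h => hne1 j' j h.symm
      rw [hDdef, Matrix.diagonal_apply_ne _ hne]
      simp
    · -- (1,0)
      rw [hπ1, hπ0, hc1, hc0]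
      have hne : e j ≠ σ (e j') := hne1 j j'
      rw [hDdef, Matrix.diagonal_apply_ne _ hne]
      simp
    · -- (1,1)
      rw [hπ1, hπ1, hc1, hc1]
      by_cases hjj : j = j'
      · subst hjj
        rw [hDdef, Matrix.diagonal_apply_eq]
        simp [Function.comp, show (RCLike.ofReal : ℝ → ℂ) = Complex.ofReal from rfl]
      · have hne : e j ≠ e j' := fun h => hjj (einj h)
        rw [hDdef, Matrix.diagonal_apply_ne _ hne]
        simp [hjj]
  · -- Y part
    have hYW : star (V * W) * Y * (V * W) = star W * Y' * W := by
      rw [hY'def, Matrix.star_mul]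
      simp only [Matrix.mul_assoc]
    rw [hYW]
    ext k l
    obtain ⟨j, α, rfl⟩ := idx_surj k
    obtain ⟨j', α', rfl⟩ := idx_surj l
    rw [hWMW, Bmat_apply]
    rcases fin2_cases α with rfl | rfl <;> rcases fin2_cases α' with rfl | rfl
    · -- (0,0) : both lower therefore zero
      rw [hπ0, hπ0]
      have hne : σ (e j') ≠ σ (e j) ∨ True := Or.inr trivial
      have hvan : Y' (σ (e j)) (σ (e j')) = 0 := by
        apply hvanish
        rw [hinvol]
        intro h
        exact hne1 j' j (by rw [← h, hinvol])
      rw [hvan]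
      simp
    · -- (0,1)
      rw [hπ0, hπ1, hc0, hc1]
      by_cases hjj : j = j'
      · subst hjj
        have hY'e2 : Y' (σ (e j)) (e j) = (starRingEnd ℂ) (z j) := by
          have h := hY'h.apply (e j) (σ (e j))
          calc Y' (σ (e j)) (e j) = star (star (Y' (σ (e j)) (e j))) := (star_star _).symm
            _ = star (Y' (e j) (σ (e j))) := by rw [h]
            _ = (starRingEnd ℂ) (z j) := rfl
        rw [hY'e2]
        have := phase_mul (z j) (hzne j)
        simp only [mul_one]
        rw [this]
        norm_num
      · have hvan : Y' (σ (e j)) (e j') = 0 := by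
          apply hvanish
          rw [hinvol]
          exact fun h => hjj (einj h).symm
        rw [hvan]
        simp [hjj]
    · -- (1,0)
      rw [hπ1, hπ0, hc1, hc0]
      by_cases hjj : j = j'
      · subst hjj
        have := mul_phase (z j) (hzne j)
        simp only [_root_.map_one, one_mul]
        rw [show Y' (e j) (σ (e j)) = z j from rfl, this]
        norm_num
      · have hvan : Y' (e j) (σ (e j')) = 0 := by
          apply hvanish
          exact fun h => hjj (einj (σinj h)).symm
        rw [hvan]
        simp [hjj]
    · -- (1,1)
      rw [hπ1, hπ1]
      have hvan : Y' (e j) (e j') = 0 := hvanish _ _ (fun h => hne1 j' j h)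
      rw [hvan]
      simp
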